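/- Instability of the p-cophenetic distance: let X be the path graph with three vertices a, b, c and two edges, let f ≡ 0 and let g be 0 on vertices and 1 on edges. Then for all p ∈ [1,∞), the p-cophenetic distance between the merge trees M = π₀S↑f and N = π₀S↑g equals 3^{1/p}, which exceeds ‖f − g‖_p = 2^{1/p}. Hence the p-cophenetic distance is not p-stable for p < ∞. -/

import Mathlib

open scoped ENNReal NNReal

/-- A persistent set: a functor `ℝ → Set`, with `ℝ` regarded as a poset category. -/
structure PersistentSet where
  obj : ℝ → Type
  map : ∀ {s t : ℝ}, s ≤ t → obj s → obj t
  map_id : ∀ (t : ℝ) (x : obj t), map (le_refl t) x = x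
  map_comp : ∀ {s t u : ℝ} (h1 : s ≤ t) (h2 : t ≤ u) (x : obj s),
    map h2 (map h1 x) = map (le_trans h1 h2) x

/-- An `ε`-interleaving between persistent sets `M` and `N`. -/
def Interleaved (M N : PersistentSet) (ε : ℝ) : Prop :=
  ∃ (hε : 0 ≤ ε) (φ : ∀ t, M.obj t → N.obj (t + ε)) (ψ : ∀ t, N.obj t → M.obj (t + ε)),
    (∀ (s t : ℝ) (h : s ≤ t) (x : M.obj s),
      φ t (M.map h x) = N.map (by linarith : s + ε ≤ t + ε) (φ s x)) ∧
    (∀ (s t : ℝ) (h : s ≤ t) (x : N.obj s),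
      ψ t (N.map h x) = M.map (by linarith : s + ε ≤ t + ε) (ψ s x)) ∧
    (∀ (s : ℝ) (x : M.obj s), ψ (s + ε) (φ s x) = M.map (by linarith : s ≤ s + ε + ε) x) ∧
    (∀ (s : ℝ) (x : N.obj s), φ (s + ε) (ψ s x) = N.map (by linarith : s ≤ s + ε + ε) x)

/-- A persistent set is constructible if it has a finite set of critical values:
it is empty before the first critical value, and the internal maps are
isomorphisms between consecutive critical values. -/
def Constructible (M : PersistentSet) : Prop :=
  ∃ τ : Finset ℝ,
    (∀ t : ℝ, (∀ s ∈ τ, t < s) → IsEmpty (M.obj t)) ∧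
    (∀ (s t : ℝ) (h : s ≤ t), (∀ c ∈ τ, c ≤ s ∨ t < c) → Function.Bijective (M.map h))

/-- A merge tree: a constructible persistent set with finite values which is
eventually a singleton. -/
structure MergeTree where
  toPS : PersistentSet
  constructible : Constructible toPS
  finite : ∀ t, Finite (toPS.obj t)
  eventually_one : ∃ T : ℝ, ∀ t, T ≤ t → (Nonempty (toPS.obj t) ∧ Subsingleton (toPS.obj t))

/-- Combinatorial data of a presentation: `k` generator strands with birth times `γ`,
`l` relation strands with birth times `ρ`, and for each relation two merge maps
`f j`, `g j` into the generators (a map of strands `R_j → G_i` exists iff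
`γ i ≤ ρ j`, which is the content of `hf`, `hg`). -/
structure Pres (k l : ℕ) where
  γ : Fin k → ℝ
  ρ : Fin l → ℝ
  f : Fin l → Fin k
  g : Fin l → Fin k
  hf : ∀ j, γ (f j) ≤ ρ j
  hg : ∀ j, γ (g j) ≤ ρ j

/-- The relation at time `t` identifying the two targets of each relation strand
born by time `t`. -/
def Pres.rel {k l : ℕ} (P : Pres k l) (t : ℝ) :
    {i : Fin k // P.γ i ≤ t} → {i : Fin k // P.γ i ≤ t} → Prop :=
  fun a b => ∃ j : Fin l, P.ρ j ≤ t ∧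
    ((P.f j = a.1 ∧ P.g j = b.1) ∨ (P.f j = b.1 ∧ P.g j = a.1))

/-- The persistent set presented by `P`: the pointwise coequalizer of the pair of maps
`⊔ⱼ Rⱼ ⇉ ⊔ᵢ Gᵢ` of disjoint unions of strands. -/
def Pres.toPS {k l : ℕ} (P : Pres k l) : PersistentSet where
  obj t := Quot (P.rel t)
  map := fun {s t} h =>
    Quot.lift (fun a => Quot.mk (P.rel t) ⟨a.1, le_trans a.2 h⟩)
      (fun a b hab => Quot.sound (by
        obtain ⟨j, hj, hc⟩ := hab
        exact ⟨j, le_trans hj h, hc⟩))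
  map_id := fun t x => Quot.inductionOn x fun a => rfl
  map_comp := fun h1 h2 x => Quot.inductionOn x fun a => rfl

/-- An isomorphism of persistent sets: a natural family of bijections. -/
structure PSIso (M N : PersistentSet) where
  hom : ∀ t, M.obj t → N.obj t
  natural : ∀ {s t : ℝ} (h : s ≤ t) (x : M.obj s), hom t (M.map h x) = N.map h (hom s x)
  bij : ∀ t, Function.Bijective (hom t)

/-- `P` is a presentation of the persistent set `M`. -/
def IsPresentation {k l : ℕ} (P : Pres k l) (M : PersistentSet) : Prop :=
  Nonempty (PSIso P.toPS M)

/-- Two presentations are compatible if their underlying 0-1 presentation matrices agree: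
entry `(i,j)` is 1 iff one of the two merge maps of relation `j` lands in generator `i`. -/
def Compatible {k l : ℕ} (P Q : Pres k l) : Prop :=
  ∀ (i : Fin k) (j : Fin l), (P.f j = i ∨ P.g j = i) ↔ (Q.f j = i ∨ Q.g j = i)

/-- The `ℓp`-norm of a finite vector of reals, `p ∈ [1,∞]`. -/
noncomputable def lpNorm (p : ℝ≥0∞) {n : ℕ} (x : Fin n → ℝ) : ℝ :=
  if p = ⊤ then ⨆ i, |x i| else (∑ i, |x i| ^ p.toReal) ^ (1 / p.toReal)

/-- The difference of the label vectors of two compatible presentations: the vector of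
differences of generator birth times followed by differences of relation birth times. -/
noncomputable def labelDiff {k l : ℕ} (P Q : Pres k l) : Fin (k + l) → ℝ :=
  Fin.append (fun i => P.γ i - Q.γ i) (fun j => P.ρ j - Q.ρ j)

/-- The `p`-presentation semi-distance between merge trees. -/
noncomputable def dHat (p : ℝ≥0∞) (M N : MergeTree) : ℝ :=
  sInf {c | ∃ (k l : ℕ) (P Q : Pres k l), Compatible P Q ∧
    IsPresentation P M.toPS ∧ IsPresentation Q N.toPS ∧
    c = lpNorm p (labelDiff P Q)}

/-- The `p`-presentation distance: the path pseudometric induced by `dHat`. -/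
noncomputable def dPres (p : ℝ≥0∞) (M N : MergeTree) : ℝ :=
  sInf {c | ∃ (n : ℕ) (Z : Fin (n + 1) → MergeTree), Z 0 = M ∧ Z (Fin.last n) = N ∧
    c = ∑ i : Fin n, dHat p (Z i.castSucc) (Z i.succ)}

/-- A point `a ∈ M(t)` is a leaf point if it is not in the image of any earlier map. -/
def IsLeafPt (M : PersistentSet) {t : ℝ} (a : M.obj t) : Prop :=
  ∀ (s : ℝ) (h : s ≤ t), s < t → a ∉ Set.range (M.map h)

/-- The merge height of two points of a persistent set: the infimum of the times at
which their images agree (the height of the least common ancestor). -/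
noncomputable def mergeHt (M : PersistentSet) {s t : ℝ} (a : M.obj s) (b : M.obj t) : ℝ :=
  sInf {u : ℝ | ∃ (h1 : s ≤ u) (h2 : t ≤ u), M.map h1 a = M.map h2 b}

/-- A surjective ordered leaf labeling of a persistent set by `Fin m`. -/
structure LeafLabeling (M : PersistentSet) (m : ℕ) where
  time : Fin m → ℝ
  pt : ∀ i, M.obj (time i)
  leaf : ∀ i, IsLeafPt M (pt i)
  surj : ∀ (t : ℝ) (a : M.obj t), IsLeafPt M a → ∃ i, time i = t ∧ HEq (pt i) a

/-- The labeled `p`-cophenetic distance (for finite `p`): the `ℓp`-distance between the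
upper-triangular cophenetic vectors of merge heights. -/
noncomputable def cophCost (p : ℝ≥0∞) {m : ℕ} {M N : PersistentSet}
    (lM : LeafLabeling M m) (lN : LeafLabeling N m) : ℝ :=
  (∑ i : Fin m, ∑ j : Fin m, if i ≤ j then
      |mergeHt M (lM.pt i) (lM.pt j) - mergeHt N (lN.pt i) (lN.pt j)| ^ p.toReal
    else 0) ^ (1 / p.toReal)

/-- The `p`-cophenetic distance between merge trees: the infimum of the labeled
`p`-cophenetic distance over all surjective ordered leaf labelings. -/
noncomputable def dCoph (p : ℝ≥0∞) (M N : MergeTree) : ℝ :=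
  sInf {c | ∃ (m : ℕ) (lM : LeafLabeling M.toPS m) (lN : LeafLabeling N.toPS m),
    c = cophCost p lM lN}

/-- The path graph `X` on three vertices `a, b, c` with the function `f ≡ 0`:
three generators born at `0`, two relations born at `0`. -/
noncomputable def presF : Pres 3 2 where
  γ := fun _ => 0
  ρ := fun _ => 0
  f := ![0, 1]
  g := ![1, 2]
  hf := fun _ => le_refl 0
  hg := fun _ => le_refl 0

/-- The path graph `X` with the function `g` which is `0` on vertices and `1` on edges:
three generators born at `0`, two relations born at `1`. -/
noncomputable def presG : Pres 3 2 where
  γ := fun _ => 0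
  ρ := fun _ => 1
  f := ![0, 1]
  g := ![1, 2]
  hf := fun _ => zero_le_one
  hg := fun _ => zero_le_one

/-! ### Auxiliary machinery -/

namespace PSIso

variable {A B : PersistentSet} (e : PSIso A B)

noncomputable def inv (t : ℝ) : B.obj t → A.obj t :=
  (Equiv.ofBijective _ (e.bij t)).symm

@[simp] lemma hom_inv (t : ℝ) (x : B.obj t) : e.hom t (e.inv t x) = x :=
  (Equiv.ofBijective _ (e.bij t)).apply_symm_apply x

@[simp] lemma inv_hom (t : ℝ) (x : A.obj t) : e.inv t (e.hom t x) = x :=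
  (Equiv.ofBijective _ (e.bij t)).symm_apply_apply x

lemma inv_natural {s t : ℝ} (h : s ≤ t) (x : B.obj s) :
    e.inv t (B.map h x) = A.map h (e.inv s x) := by
  apply (e.bij t).1
  rw [e.hom_inv, e.natural, e.hom_inv]

lemma leaf_iff {t : ℝ} (a : A.obj t) : IsLeafPt B (e.hom t a) ↔ IsLeafPt A a := by
  constructor
  · intro hl s h hs ⟨y, hy⟩
    exact hl s h hs ⟨e.hom s y, by rw [← e.natural h y, hy]⟩
  · intro hl s h hs ⟨y, hy⟩
    refine hl s h hs ⟨e.inv s y, ?_⟩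
    apply (e.bij t).1
    rw [e.natural, e.hom_inv, hy]

lemma mergeHt_iso {s t : ℝ} (a : A.obj s) (b : A.obj t) :
    mergeHt B (e.hom s a) (e.hom t b) = mergeHt A a b := by
  unfold mergeHt
  congr 1
  ext u
  constructor
  · rintro ⟨h1, h2, heq⟩
    rw [← e.natural h1 a, ← e.natural h2 b] at heq
    exact ⟨h1, h2, (e.bij u).1 heq⟩
  · rintro ⟨h1, h2, heq⟩
    exact ⟨h1, h2, by rw [← e.natural h1 a, ← e.natural h2 b, heq]⟩

end PSIso

namespace Pres

variable {k l : ℕ} (P : Pres k l)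

lemma map_mk {s t : ℝ} (h : s ≤ t) (i : Fin k) (hi : P.γ i ≤ s) :
    P.toPS.map h (Quot.mk (P.rel s) ⟨i, hi⟩) = Quot.mk (P.rel t) ⟨i, le_trans hi h⟩ := rfl

lemma leaf_time (hγ : ∀ i, P.γ i = 0) {t : ℝ} (a : P.toPS.obj t)
    (ha : IsLeafPt P.toPS a) : t = 0 := by
  induction a using Quot.inductionOn with
  | _ x =>
    have h0t : (0 : ℝ) ≤ t := (hγ x.1) ▸ x.2
    rcases eq_or_lt_of_le h0t with h | h
    · exact h.symm
    · exfalso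
      refine ha 0 h0t h ⟨Quot.mk (P.rel 0) ⟨x.1, (hγ x.1).le⟩, ?_⟩
      exact P.map_mk h0t x.1 (hγ x.1).le

lemma empty_neg (hγ : ∀ i, P.γ i = 0) {s : ℝ} (hs : s < 0) : IsEmpty (P.toPS.obj s) :=
  ⟨fun a => Quot.inductionOn a fun x => absurd ((hγ x.1) ▸ x.2) (not_le.2 hs)⟩

lemma leaf_at_zero (hγ : ∀ i, P.γ i = 0) (a : P.toPS.obj 0) : IsLeafPt P.toPS a :=
  fun s _ hs ⟨y, _⟩ => (P.empty_neg hγ hs).false y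

end Pres

lemma presF_gamma : ∀ i, presF.γ i = 0 := fun _ => rfl
lemma presG_gamma : ∀ i, presG.γ i = 0 := fun _ => rfl

/-- At times `t < 1` the persistent set of `presG` is a disjoint union of three strands;
`idx` extracts the strand index. -/
def idxG {t : ℝ} (ht : t < 1) : presG.toPS.obj t → Fin 3 :=
  Quot.lift (fun a => a.1) (fun a b h => by
    exfalso
    obtain ⟨j, hj, -⟩ := h
    have h1 : (1 : ℝ) ≤ t := hj
    linarith)

@[simp] lemma idxG_mk {t : ℝ} (ht : t < 1) (i : Fin 3) (hi : presG.γ i ≤ t) :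
    idxG ht (Quot.mk (presG.rel t) ⟨i, hi⟩) = i := rfl

lemma idxG_inj {t : ℝ} (ht : t < 1) {a b : presG.toPS.obj t}
    (h : idxG ht a = idxG ht b) : a = b := by
  induction a using Quot.inductionOn with
  | _ x =>
    induction b using Quot.inductionOn with
    | _ y =>
      have : x = y := Subtype.ext h
      rw [this]

lemma idxG_map {s t : ℝ} (hs : s < 1) (ht : t < 1) (h : s ≤ t) (x : presG.toPS.obj s) :
    idxG ht (presG.toPS.map h x) = idxG hs x :=
  Quot.inductionOn x fun _ => rfl

/-- At times `t ≥ 1` the persistent set of `presG` is a single point. -/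
lemma presG_sub {t : ℝ} (ht : (1 : ℝ) ≤ t) (a b : presG.toPS.obj t) : a = b := by
  have key : ∀ i : Fin 3, ∀ hi : presG.γ i ≤ t,
      Quot.mk (presG.rel t) ⟨i, hi⟩ = Quot.mk (presG.rel t) ⟨1, (presG_gamma 1).le.trans (zero_le_one.trans ht)⟩ := by
    intro i hi
    fin_cases i
    · exact Quot.sound ⟨0, ht, Or.inl ⟨rfl, rfl⟩⟩
    · rfl
    · exact Quot.sound ⟨1, ht, Or.inr ⟨rfl, rfl⟩⟩
  induction a using Quot.inductionOn with
  | _ x =>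
    induction b using Quot.inductionOn with
    | _ y => rw [key x.1 x.2, key y.1 y.2]

/-- At times `t ≥ 0` the persistent set of `presF` is a single point. -/
lemma presF_sub {t : ℝ} (ht : (0 : ℝ) ≤ t) (a b : presF.toPS.obj t) : a = b := by
  have key : ∀ i : Fin 3, ∀ hi : presF.γ i ≤ t,
      Quot.mk (presF.rel t) ⟨i, hi⟩ = Quot.mk (presF.rel t) ⟨1, ht⟩ := by
    intro i hi
    fin_cases i
    · exact Quot.sound ⟨0, ht, Or.inl ⟨rfl, rfl⟩⟩
    · rfl
    · exact Quot.sound ⟨1, ht, Or.inr ⟨rfl, rfl⟩⟩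
  induction a using Quot.inductionOn with
  | _ x =>
    induction b using Quot.inductionOn with
    | _ y => rw [key x.1 x.2, key y.1 y.2]

lemma mergeG_eq {s t : ℝ} (hs : s = 0) (ht : t = 0)
    (hs1 : s < 1) (ht1 : t < 1) (a : presG.toPS.obj s) (b : presG.toPS.obj t) :
    mergeHt presG.toPS a b = if idxG hs1 a = idxG ht1 b then 0 else 1 := by
  subst hs; subst ht
  split_ifs with h
  · have hab : a = b := idxG_inj hs1 h
    subst hab
    refine IsLeast.csInf_eq ⟨⟨le_refl 0, le_refl 0, rfl⟩, ?_⟩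
    rintro u ⟨h1, -, -⟩
    exact h1
  · refine IsLeast.csInf_eq ⟨⟨zero_le_one, zero_le_one, presG_sub le_rfl _ _⟩, ?_⟩
    rintro u ⟨h1, h2, heq⟩
    by_contra hu
    push_neg at hu
    refine h ?_
    have := idxG_map hs1 hu h1 a
    rw [heq, idxG_map ht1 hu h2 b] at this
    exact this.symm

/-- The canonical leaf labeling of a merge tree isomorphic to `presF.toPS`. -/
noncomputable def labM {PM : PersistentSet} (e : PSIso presF.toPS PM) :
    LeafLabeling PM 3 where
  time _ := 0
  pt i := e.hom 0 (Quot.mk (presF.rel 0) ⟨i, (presF_gamma i).le⟩)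
  leaf i := (e.leaf_iff _).2 (presF.leaf_at_zero presF_gamma _)
  surj t a ha := by
    have hq : IsLeafPt presF.toPS (e.inv t a) := by
      rw [← e.leaf_iff, e.hom_inv]; exact ha
    have ht : t = 0 := presF.leaf_time presF_gamma _ hq
    subst ht
    refine ⟨0, rfl, heq_of_eq ?_⟩
    obtain ⟨x, hx⟩ := (e.bij 0).2 a
    rw [← hx]
    exact congrArg (e.hom 0) (presF_sub le_rfl _ _)

/-- The canonical leaf labeling of a merge tree isomorphic to `presG.toPS`. -/
noncomputable def labN {PN : PersistentSet} (e : PSIso presG.toPS PN) :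
    LeafLabeling PN 3 where
  time _ := 0
  pt i := e.hom 0 (Quot.mk (presG.rel 0) ⟨i, (presG_gamma i).le⟩)
  leaf i := (e.leaf_iff _).2 (presG.leaf_at_zero presG_gamma _)
  surj t a ha := by
    have hq : IsLeafPt presG.toPS (e.inv t a) := by
      rw [← e.leaf_iff, e.hom_inv]; exact ha
    have ht : t = 0 := presG.leaf_time presG_gamma _ hq
    subst ht
    refine ⟨idxG one_pos (e.inv 0 a), rfl, heq_of_eq ?_⟩
    have : Quot.mk (presG.rel 0) ⟨idxG one_pos (e.inv 0 a), (presG_gamma _).le⟩ = e.inv 0 a := by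
      induction (e.inv 0 a) using Quot.inductionOn with
      | _ x => rfl
    show e.hom 0 (Quot.mk (presG.rel 0) ⟨idxG one_pos (e.inv 0 a), (presG_gamma _).le⟩) = a
    rw [this, e.hom_inv]

lemma card_lb {m : ℕ} {lab : Fin m → Fin 3} (hs : Function.Surjective lab) :
    3 ≤ (Finset.univ.filter
      (fun q : Fin m × Fin m => q.1 ≤ q.2 ∧ lab q.1 ≠ lab q.2)).card := by
  classical
  obtain ⟨i0, h0⟩ := hs 0
  obtain ⟨i1, h1⟩ := hs 1
  obtain ⟨i2, h2⟩ := hs 2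
  set sw : Fin m → Fin m → Fin m × Fin m := fun a b => if a ≤ b then (a, b) else (b, a) with hsw
  have hmem : ∀ a b, lab a ≠ lab b → sw a b ∈ Finset.univ.filter
      (fun q : Fin m × Fin m => q.1 ≤ q.2 ∧ lab q.1 ≠ lab q.2) := by
    intro a b hne
    rw [hsw]
    simp only [Finset.mem_filter, Finset.mem_univ, true_and]
    split_ifs with h
    · exact ⟨h, hne⟩
    · exact ⟨(not_le.1 h).le, hne.symm⟩
  have hlabset : ∀ a b, ({lab (sw a b).1, lab (sw a b).2} : Finset (Fin 3)) = {lab a, lab b} := by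
    intro a b
    rw [hsw]
    dsimp only
    split_ifs with h
    · rfl
    · exact Finset.pair_comm _ _
  have hd : ∀ a b c d : Fin m, ({lab a, lab b} : Finset (Fin 3)) ≠ {lab c, lab d} →
      sw a b ≠ sw c d := by
    intro a b c d hne heq
    exact hne (by rw [← hlabset a b, ← hlabset c d, heq])
  have d01 : ({(0:Fin 3), 1} : Finset (Fin 3)) ≠ {0, 2} := by decide
  have d02 : ({(0:Fin 3), 1} : Finset (Fin 3)) ≠ {1, 2} := by decide
  have d12 : ({(0:Fin 3), 2} : Finset (Fin 3)) ≠ {1, 2} := by decide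
  have hsub : ({sw i0 i1, sw i0 i2, sw i1 i2} : Finset (Fin m × Fin m)) ⊆
      Finset.univ.filter (fun q : Fin m × Fin m => q.1 ≤ q.2 ∧ lab q.1 ≠ lab q.2) := by
    intro q hq
    simp only [Finset.mem_insert, Finset.mem_singleton] at hq
    rcases hq with rfl | rfl | rfl
    · exact hmem _ _ (by rw [h0, h1]; decide)
    · exact hmem _ _ (by rw [h0, h2]; decide)
    · exact hmem _ _ (by rw [h1, h2]; decide)
  have hcard : ({sw i0 i1, sw i0 i2, sw i1 i2} : Finset (Fin m × Fin m)).card = 3 := by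
    rw [Finset.card_insert_of_notMem, Finset.card_insert_of_notMem, Finset.card_singleton]
    · simp only [Finset.mem_singleton]
      exact hd _ _ _ _ (by rw [h0, h1, h2]; exact d12)
    · simp only [Finset.mem_insert, Finset.mem_singleton]
      push_neg
      exact ⟨hd _ _ _ _ (by rw [h0, h1, h2]; exact d01),
             hd _ _ _ _ (by rw [h0, h1, h2]; exact d02)⟩
  calc 3 = ({sw i0 i1, sw i0 i2, sw i1 i2} : Finset (Fin m × Fin m)).card := hcard.symm
    _ ≤ _ := Finset.card_le_card hsub

lemma cost_formula (p : ℝ≥0∞) (hpt : 1 ≤ p.toReal) {PM PN : PersistentSet} {m : ℕ}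
    (eM : PSIso presF.toPS PM) (eN : PSIso presG.toPS PN)
    (lM : LeafLabeling PM m) (lN : LeafLabeling PN m) :
    ∃ lab : Fin m → Fin 3, Function.Surjective lab ∧
      cophCost p lM lN =
        ((Finset.univ.filter
          (fun q : Fin m × Fin m => q.1 ≤ q.2 ∧ lab q.1 ≠ lab q.2)).card : ℝ) ^ (1 / p.toReal) := by
  classical
  have hpt0 : p.toReal ≠ 0 := by linarith
  have htM : ∀ i, lM.time i = 0 := fun i =>
    presF.leaf_time presF_gamma _ (by rw [← eM.leaf_iff, eM.hom_inv]; exact lM.leaf i)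
  have htN : ∀ i, lN.time i = 0 := fun i =>
    presG.leaf_time presG_gamma _ (by rw [← eN.leaf_iff, eN.hom_inv]; exact lN.leaf i)
  have hlt : ∀ i, lN.time i < 1 := fun i => by rw [htN i]; norm_num
  refine ⟨fun i => idxG (hlt i) (eN.inv _ (lN.pt i)), ?_, ?_⟩
  · -- surjectivity
    intro r
    obtain ⟨i, hti, hheq⟩ := lN.surj 0 (eN.hom 0 (Quot.mk (presG.rel 0) ⟨r, (presG_gamma r).le⟩))
      ((eN.leaf_iff _).2 (presG.leaf_at_zero presG_gamma _))
    refine ⟨i, ?_⟩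
    have H : ∀ (s : ℝ) (x : PN.obj s) (hs : s = 0) (hs1 : s < 1),
        HEq x (eN.hom 0 (Quot.mk (presG.rel 0) ⟨r, (presG_gamma r).le⟩)) →
        idxG hs1 (eN.inv s x) = r := by
      intro s x hs hs1 hx
      subst hs
      rw [eq_of_heq hx]
      exact (congrArg (idxG hs1) (eN.inv_hom 0 _)).trans rfl
    exact H _ _ hti (hlt i) hheq
  · -- cost formula
    have hmM : ∀ i j, mergeHt PM (lM.pt i) (lM.pt j) = 0 := by
      intro i j
      refine IsLeast.csInf_eq ⟨⟨(htM i).le, (htM j).le, ?_⟩, ?_⟩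
      · obtain ⟨x, hx⟩ := (eM.bij _).2 (lM.pt i)
        obtain ⟨y, hy⟩ := (eM.bij _).2 (lM.pt j)
        rw [← hx, ← hy, ← eM.natural, ← eM.natural]
        exact congrArg _ (presF_sub le_rfl _ _)
      · rintro u ⟨h1, -, -⟩
        rw [htM i] at h1
        exact h1
    have hmN : ∀ i j, mergeHt PN (lN.pt i) (lN.pt j) =
        if idxG (hlt i) (eN.inv _ (lN.pt i)) = idxG (hlt j) (eN.inv _ (lN.pt j))
          then 0 else 1 := by
      intro i j
      conv_lhs => rw [← eN.hom_inv _ (lN.pt i), ← eN.hom_inv _ (lN.pt j)]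
      rw [eN.mergeHt_iso]
      exact mergeG_eq (htN i) (htN j) (hlt i) (hlt j) _ _
    have hterm : ∀ i j : Fin m,
        (if i ≤ j then
          |mergeHt PM (lM.pt i) (lM.pt j) - mergeHt PN (lN.pt i) (lN.pt j)| ^ p.toReal
        else 0) =
        (if i ≤ j ∧ idxG (hlt i) (eN.inv _ (lN.pt i)) ≠ idxG (hlt j) (eN.inv _ (lN.pt j))
          then 1 else 0) := by
      intro i j
      rw [hmM, hmN]
      by_cases hij : i ≤ j <;>
        by_cases hl : idxG (hlt i) (eN.inv _ (lN.pt i)) = idxG (hlt j) (eN.inv _ (lN.pt j)) <;>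
        simp [hij, hl, Real.zero_rpow hpt0, Real.one_rpow]
    unfold cophCost
    congr 1
    rw [← Finset.sum_boole, ← Finset.univ_product_univ, Finset.sum_product]
    exact Finset.sum_congr rfl fun i _ => Finset.sum_congr rfl fun j _ => hterm i j
/-- instability of the `p`-cophenetic distance.  For the merge trees
`M = π₀S↑f` and `N = π₀S↑g` of the cellular functions `f ≡ 0` and `g` (0 on vertices,
1 on edges) on the path graph with three vertices, and any `p ∈ [1,∞)`, the
`p`-cophenetic distance equals `3^(1/p)`, which exceeds `‖f - g‖_p = 2^(1/p)`.
Hence the `p`-cophenetic distance is not `p`-stable for `p < ∞`. -/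
theorem cophenetic_instability (p : ℝ≥0∞) (hp : 1 ≤ p) (hp' : p ≠ ⊤)
    (M N : MergeTree)
    (hM : IsPresentation presF M.toPS) (hN : IsPresentation presG N.toPS) :
    dCoph p M N = (3 : ℝ) ^ (1 / p.toReal) ∧
    lpNorm p (labelDiff presF presG) = (2 : ℝ) ^ (1 / p.toReal) ∧
    dCoph p M N > lpNorm p (labelDiff presF presG) := by
  classical
  obtain ⟨eM⟩ := hM
  obtain ⟨eN⟩ := hN
  have hpt : 1 ≤ p.toReal := by
    rw [← ENNReal.toReal_one]
    exact ENNReal.toReal_mono hp' hp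
  have hpt0 : 0 < p.toReal := lt_of_lt_of_le one_pos hpt
  -- lower bound for every element of the dCoph set
  have hlb : ∀ c ∈ {c | ∃ (m : ℕ) (lM : LeafLabeling M.toPS m) (lN : LeafLabeling N.toPS m),
      c = cophCost p lM lN}, (3 : ℝ) ^ (1 / p.toReal) ≤ c := by
    rintro c ⟨m, lM, lN, rfl⟩
    obtain ⟨lab, hsurj, hcost⟩ := cost_formula p hpt eM eN lM lN
    rw [hcost]
    refine Real.rpow_le_rpow (by norm_num) ?_ (by positivity)
    exact_mod_cast card_lb hsurj
  -- the value 3^(1/p) is attained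
  have hmem : (3 : ℝ) ^ (1 / p.toReal) ∈ {c | ∃ (m : ℕ) (lM : LeafLabeling M.toPS m)
      (lN : LeafLabeling N.toPS m), c = cophCost p lM lN} := by
    refine ⟨3, labM eM, labN eN, ?_⟩
    obtain ⟨lab, hsurj, hcost⟩ := cost_formula p hpt eM eN (labM eM) (labN eN)
    rw [hcost]
    have hinj : Function.Injective lab := Finite.injective_iff_surjective.2 hsurj
    have : (Finset.univ.filter
        (fun q : Fin 3 × Fin 3 => q.1 ≤ q.2 ∧ lab q.1 ≠ lab q.2)) =
        (Finset.univ.filter (fun q : Fin 3 × Fin 3 => q.1 < q.2)) := by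
      refine Finset.filter_congr fun q _ => ?_
      constructor
      · rintro ⟨hle, hne⟩
        exact lt_of_le_of_ne hle (fun h => hne (by rw [h]))
      · intro hlt
        exact ⟨hlt.le, fun h => hlt.ne (hinj h)⟩
    rw [this]
    norm_num [show (Finset.univ.filter (fun q : Fin 3 × Fin 3 => q.1 < q.2)).card = 3 by decide]
  have h1 : dCoph p M N = (3 : ℝ) ^ (1 / p.toReal) := by
    unfold dCoph
    exact le_antisymm (csInf_le ⟨_, hlb⟩ hmem) (le_csInf ⟨_, hmem⟩ hlb)
  have hvec : labelDiff presF presG = ![0, 0, 0, -1, -1] := by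
    funext i
    fin_cases i <;>
      simp [labelDiff, presF, presG, Fin.append, Fin.addCases] <;> norm_num
  have h2 : lpNorm p (labelDiff presF presG) = (2 : ℝ) ^ (1 / p.toReal) := by
    rw [lpNorm, if_neg hp', hvec]
    rw [Fin.sum_univ_five]
    norm_num [Real.zero_rpow hpt0.ne', Real.one_rpow, Matrix.cons_val,
      show (![0, 0, 0, -1, -1] : Fin (3 + 2) → ℝ) 2 = 0 from rfl,
      show (![0, 0, 0, -1, -1] : Fin (3 + 2) → ℝ) 3 = -1 from rfl,
      show (![0, 0, 0, -1, -1] : Fin (3 + 2) → ℝ) 4 = -1 from rfl]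
  refine ⟨h1, h2, ?_⟩
  rw [h1, h2]
  exact Real.rpow_lt_rpow (by norm_num) (by norm_num) (by positivity)
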